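/- For λ ∈ Γ_k with H_k = 1 (where H_j = σ_j(λ)/C(n,j)), one has σ₁(λ)σ_k(λ) − (k+1)σ_{k+1}(λ) ≥ (k/n) σ₁(λ) σ_k(λ) ≥ k σ_k(λ), with equality if and only if λ₁ = ⋯ = λₙ = 1. -/

import Mathlib

open Matrix Finset Real MeasureTheory

/-- Partial derivative of `f` in the `i`-th coordinate direction at `x`. -/
noncomputable def pd {n : ℕ} (f : (Fin n → ℝ) → ℝ) (i : Fin n) (x : Fin n → ℝ) : ℝ :=
  fderiv ℝ f x (Pi.single i 1)

/-- Squared Euclidean norm of the gradient `|Du|²`. -/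
noncomputable def gradSq {n : ℕ} (u : (Fin n → ℝ) → ℝ) (x : Fin n → ℝ) : ℝ :=
  ∑ i, (pd u i x) ^ 2

/-- The shape operator `h_i^j = ∂/∂x_i (u_j / √(1 - |Du|²))` of the spacelike graph of `u`. -/
noncomputable def Aop {n : ℕ} (u : (Fin n → ℝ) → ℝ) (x : Fin n → ℝ) :
    Matrix (Fin n) (Fin n) ℝ :=
  Matrix.of fun i j => pd (fun y => pd u j y / Real.sqrt (1 - gradSq u y)) i x

/-- `σ_k(A)`: the `k`-th elementary symmetric function of the eigenvalues of `A`,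
read off from the characteristic polynomial. -/
noncomputable def msigma (n k : ℕ) (A : Matrix (Fin n) (Fin n) ℝ) : ℝ :=
  if k ≤ n then (-1 : ℝ) ^ k * (Matrix.charpoly A).coeff (n - k) else 0

/-- The Newton tensor `(σ_k(A))^i_j = ∂σ_k(A)/∂A^j_i`. -/
noncomputable def newton (n k : ℕ) (A : Matrix (Fin n) (Fin n) ℝ) :
    Matrix (Fin n) (Fin n) ℝ :=
  Matrix.of fun i j =>
    deriv (fun t : ℝ => msigma n k (A + t • Matrix.single j i 1)) 0

/-- `σ_k(λ)` for `λ ∈ ℝⁿ`. -/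
noncomputable def esymm (n k : ℕ) (lam : Fin n → ℝ) : ℝ :=
  ∑ s ∈ Finset.powersetCard k Finset.univ, ∏ i ∈ s, lam i

/-- The Gårding cone `Γ_k`. -/
def GammaK (n k : ℕ) : Set (Fin n → ℝ) :=
  {lam | ∀ i, 1 ≤ i → i ≤ k → 0 < esymm n i lam}

/-- The Minkowski scalar product on `ℝ^{n,1}`. -/
noncomputable def mink (n : ℕ) (Y Z : Fin (n + 1) → ℝ) : ℝ :=
  (∑ i : Fin n, Y i.castSucc * Z i.castSucc) - Y (Fin.last n) * Z (Fin.last n)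

/-- The graph map `X(x) = (x, u(x))`. -/
noncomputable def Xg {n : ℕ} (u : (Fin n → ℝ) → ℝ) (z : Fin n → ℝ) : Fin (n + 1) → ℝ :=
  Fin.snoc z (u z)

/-- The timelike unit normal `N = (Du, 1)/√(1 - |Du|²)` of the graph of `u`. -/
noncomputable def Nvec {n : ℕ} (u : (Fin n → ℝ) → ℝ) (x : Fin n → ℝ) : Fin (n + 1) → ℝ :=
  fun j => (Fin.snoc (fun i => pd u i x) 1 : Fin (n + 1) → ℝ) j / Real.sqrt (1 - gradSq u x)

namespace SigmaChainAux

open Polynomial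

open Multiset

lemma esymm_zero (s : Multiset ℝ) : s.esymm 0 = 1 := by
  simp [Multiset.esymm]

lemma esymm_cons (a : ℝ) (s : Multiset ℝ) (j : ℕ) :
    (a ::ₘ s).esymm (j + 1) = s.esymm (j + 1) + a * s.esymm j := by
  rw [Multiset.esymm, Multiset.powersetCard_cons, Multiset.map_add, Multiset.sum_add,
    Multiset.map_map]
  have h : (Multiset.map (Multiset.prod ∘ Multiset.cons a) (Multiset.powersetCard j s)).sum
      = a * s.esymm j := by
    rw [Multiset.esymm, ← Multiset.sum_map_mul_left]
    congr 1
    apply Multiset.map_congr rfl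
    intro t _
    simp [Multiset.prod_cons]
  rw [h]
  rfl

lemma esymm_one (s : Multiset ℝ) : s.esymm 1 = s.sum := by
  rw [Multiset.esymm, Multiset.powersetCard_one, Multiset.map_map]
  simp

lemma esymm_of_card_lt {s : Multiset ℝ} {j : ℕ} (h : Multiset.card s < j) : s.esymm j = 0 := by
  rw [Multiset.esymm, Multiset.powersetCard_eq_empty _ h]
  simp

lemma esymm_card (s : Multiset ℝ) : s.esymm (Multiset.card s) = s.prod := by
  induction s using Multiset.induction with
  | empty => simp [esymm_zero]
  | cons a t ih =>
      rw [Multiset.card_cons, esymm_cons, ih, esymm_of_card_lt (by simp), Multiset.prod_cons]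
      ring

lemma sq_sum_esymm (s : Multiset ℝ) :
    s.sum ^ 2 = (s.map (fun x => x ^ 2)).sum + 2 * s.esymm 2 := by
  induction s using Multiset.induction with
  | empty => simp [esymm_zero, esymm_of_card_lt]; exact esymm_of_card_lt (by simp)
  | cons a t ih =>
      rw [Multiset.sum_cons, Multiset.map_cons, Multiset.sum_cons, esymm_cons, esymm_one]
      nlinarith [ih]

lemma cauchy_ms (s : Multiset ℝ) :
    s.sum ^ 2 ≤ (Multiset.card s : ℝ) * (s.map (fun x => x ^ 2)).sum := by
  induction s using Multiset.induction with
  | empty => simp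
  | cons a t ih =>
      rw [Multiset.sum_cons, Multiset.map_cons, Multiset.sum_cons, Multiset.card_cons]
      push_cast
      have h1 : (0:ℝ) ≤ Multiset.card t := by positivity
      have h2 : (0:ℝ) ≤ (t.map (fun x => x ^ 2)).sum := by
        apply Multiset.sum_nonneg
        intro x hx
        obtain ⟨y, _, rfl⟩ := Multiset.mem_map.1 hx
        positivity
      rcases eq_or_ne t 0 with rfl | ht
      · simp
      · have h1' : (1:ℝ) ≤ Multiset.card t := by
          have : 1 ≤ Multiset.card t := Nat.one_le_iff_ne_zero.2 (by simpa using ht)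
          exact_mod_cast this
        nlinarith [ih, sq_nonneg ((Multiset.card t : ℝ) * a - t.sum),
          mul_nonneg (by positivity : (0:ℝ) ≤ (Multiset.card t : ℝ) + 1) (sub_nonneg.2 ih),
          sq_nonneg (a + t.sum)]

lemma esymm_reciprocal (s : Multiset ℝ) (h0 : (0:ℝ) ∉ s) :
    ∀ j ≤ Multiset.card s,
      s.esymm (Multiset.card s - j) = s.prod * ((s.map (fun x => x⁻¹)).esymm j) := by
  induction s using Multiset.induction with
  | empty =>
      intro j hj
      simp only [Multiset.card_zero, Nat.le_zero] at hj
      subst hj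
      simp [esymm_zero]
  | cons a t ih =>
      intro j hj
      have ha : a ≠ 0 := fun h => h0 (by rw [← h]; exact Multiset.mem_cons_self a t)
      have h0t : (0:ℝ) ∉ t := fun h => h0 (Multiset.mem_cons_of_mem h)
      have hpt : t.prod ≠ 0 := Multiset.prod_ne_zero h0t
      rcases Nat.eq_zero_or_pos j with rfl | hj1
      · rw [Nat.sub_zero, esymm_card, esymm_zero, mul_one]
      obtain ⟨i, rfl⟩ : ∃ i, j = i + 1 := ⟨j - 1, by omega⟩
      rw [Multiset.card_cons] at hj ⊢
      rw [Multiset.map_cons, esymm_cons, Multiset.prod_cons]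
      rcases Nat.lt_or_ge i (Multiset.card t) with hi | hi
      · -- i + 1 ≤ card t, so card t + 1 - (1+i) = (card t - (1+i)) + 1
        have hd : Multiset.card t + 1 - (i + 1) = (Multiset.card t - (i + 1)) + 1 := by omega
        rw [hd, esymm_cons]
        have e1 : t.esymm (Multiset.card t - (i + 1) + 1) = t.esymm (Multiset.card t - i) := by
          congr 1; omega
        rw [e1, ih h0t i (by omega), ih h0t (i + 1) (by omega)]
        field_simp
        ring
      · -- i ≥ card t; since i + 1 ≤ card t + 1, i = card t
        have hi' : i = Multiset.card t := by omega
        subst hi'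
        rw [Nat.sub_self, esymm_zero]
        rw [esymm_of_card_lt (by rw [Multiset.card_map]; omega)]
        have : (t.map (fun x => x⁻¹)).esymm (Multiset.card t) = (t.map (fun x => x⁻¹)).prod := by
          rw [← Multiset.card_map (fun x => x⁻¹) t, esymm_card]
        rw [this, Multiset.prod_map_inv']
        field_simp
        ring

lemma sum_sq_nonneg (s : Multiset ℝ) : (0:ℝ) ≤ (s.map (fun x => x ^ 2)).sum := by
  apply Multiset.sum_nonneg
  intro x hx
  obtain ⟨y, _, rfl⟩ := Multiset.mem_map.1 hx
  positivity

/-- the top Newton inequality `2 m e_{m-2} e_m ≤ (m-1) e_{m-1}^2`. -/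
lemma newton_top_raw (s : Multiset ℝ) (hm : 2 ≤ Multiset.card s) :
    2 * (Multiset.card s : ℝ) * (s.esymm (Multiset.card s - 2) * s.esymm (Multiset.card s)) ≤
      ((Multiset.card s : ℝ) - 1) * s.esymm (Multiset.card s - 1) ^ 2 := by
  set m := Multiset.card s with hm_def
  have hm1 : (1:ℝ) ≤ (m:ℝ) := by exact_mod_cast Nat.one_le_of_lt hm
  by_cases h0 : (0:ℝ) ∈ s
  · have h3 : s.esymm m = 0 := by rw [esymm_card]; exact Multiset.prod_eq_zero h0
    rw [h3]
    have : (0:ℝ) ≤ ((m:ℝ) - 1) * s.esymm (m - 1) ^ 2 :=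
      mul_nonneg (by linarith) (sq_nonneg _)
    linarith
  · set μ := s.map (fun x => x⁻¹) with hμ
    have hcard : Multiset.card μ = m := by rw [hμ, Multiset.card_map]
    have h1 : s.esymm (m - 1) = s.prod * μ.esymm 1 := esymm_reciprocal s h0 1 (by omega)
    have h2 : s.esymm (m - 2) = s.prod * μ.esymm 2 := esymm_reciprocal s h0 2 (by omega)
    have h3 : s.esymm m = s.prod := esymm_card s
    rw [h1, h2, h3, esymm_one]
    have hB := sq_sum_esymm μ
    have hC := cauchy_ms μ
    rw [hcard] at hC
    have hB2 : s.prod^2 * μ.sum ^ 2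
        = s.prod^2 * (Multiset.map (fun x => x ^ 2) μ).sum + 2 * (s.prod^2 * μ.esymm 2) := by
      rw [hB]; ring
    have hC2 := mul_le_mul_of_nonneg_left hC (sq_nonneg s.prod)
    nlinarith [hB2, hC2]

/-- normalized symmetric function -/
noncomputable def NH (s : Multiset ℝ) (j : ℕ) : ℝ :=
  s.esymm j / ((Multiset.card s).choose j : ℝ)

lemma choose_id (m i : ℕ) : m * (m-1).choose i = (m - i) * m.choose i := by
  rcases Nat.eq_zero_or_pos m with rfl | hm
  · simp
  rcases Nat.lt_or_ge i m with hi | hi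
  · obtain ⟨m', rfl⟩ : ∃ m', m = m' + 1 := ⟨m - 1, by omega⟩
    simp only [Nat.add_sub_cancel]
    calc (m' + 1) * m'.choose i = (m'+1).choose (i+1) * (i+1) := Nat.add_one_mul_choose_eq m' i
      _ = (m'+1).choose i * ((m'+1) - i) := Nat.choose_succ_right_eq (m'+1) i
      _ = ((m'+1) - i) * (m'+1).choose i := mul_comm _ _
  · rw [Nat.choose_eq_zero_of_lt (by omega : m - 1 < i), Nat.mul_zero]
    have h : m - i = 0 := by omega
    rw [h, Nat.zero_mul]

lemma cast_sub_nat {m i : ℕ} (h : i ≤ m) : ((m - i : ℕ) : ℝ) = (m : ℝ) - i := by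
  push_cast [Nat.cast_sub h]
  ring

theorem newton_NH : ∀ m : ℕ, ∀ s : Multiset ℝ, Multiset.card s = m → ∀ j : ℕ, 1 ≤ j →
    j + 1 ≤ m → NH s (j - 1) * NH s (j + 1) ≤ NH s j ^ 2 := by
  intro m
  induction m using Nat.strong_induction_on with
  | _ m IH =>
    intro s hs j hj1 hjm
    rcases eq_or_lt_of_le hjm with heq | hlt
    · -- top case : j + 1 = m
      subst heq
      have hraw := newton_top_raw s (by omega)
      rw [hs] at hraw
      have e1 : j + 1 - 2 = j - 1 := by omega
      have e2 : j + 1 - 1 = j := by omega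
      rw [e1, e2] at hraw
      have c1 : ((j+1).choose (j+1) : ℝ) = 1 := by rw [Nat.choose_self]; norm_num
      have c2 : ((j+1).choose j : ℝ) = (j:ℝ) + 1 := by
        have : (j+1).choose j = j + 1 := by
          rw [← Nat.choose_symm (by omega : j ≤ j + 1)]
          simp
        rw [this]; push_cast; ring
      have c3 : 2 * ((j+1).choose (j-1) : ℝ) = ((j:ℝ)+1) * j := by
        have h2 : (j+1).choose (j-1) = (j+1).choose 2 := by
          rw [← Nat.choose_symm (by omega : j - 1 ≤ j + 1)]
          congr 1
          omega
        have h3 : (j+1).choose 2 * 2 = (j+1).choose 1 * (j + 1 - 1) := Nat.choose_succ_right_eq (j+1) 1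
        rw [Nat.choose_one_right] at h3
        simp only [Nat.add_sub_cancel] at h3
        rw [h2]
        have := congrArg (fun x : ℕ => (x : ℝ)) h3
        push_cast at this
        linarith
      have hchpos : (0:ℝ) < ((j+1).choose (j-1) : ℝ) := by
        have : 0 < (j+1).choose (j-1) := Nat.choose_pos (by omega)
        exact_mod_cast this
      rw [NH, NH, NH, hs, c1, c2]
      rw [div_mul_div_comm, div_pow, div_le_div_iff₀ (by positivity) (by positivity)]
      have hjpos : (0:ℝ) ≤ (j:ℝ) + 1 := by positivity
      push_cast at hraw
      nlinarith [mul_le_mul_of_nonneg_left hraw hjpos, c3, hraw]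
    · -- inductive case : j + 1 < m, use the derivative
      have hm2 : 2 ≤ m := by omega
      set t := s.map (fun x : ℝ => -x) with ht
      have hct : Multiset.card t = m := by rw [ht, Multiset.card_map, hs]
      set p := (t.map fun a => X - C a).prod with hp
      have hproots : p.roots = t := roots_multiset_prod_X_sub_C t
      have hpmonic : p.Monic := monic_multiset_prod_of_monic _ _ (fun i _ => monic_X_sub_C i)
      have hpdeg : p.natDegree = m := by
        rw [hp, natDegree_multiset_prod_of_monic]
        · simp only [Multiset.map_map, Function.comp_def, natDegree_X_sub_C]
          rw [Multiset.map_const', Multiset.sum_replicate, smul_eq_mul, mul_one, hct]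
        · intro f hf
          obtain ⟨a, _, rfl⟩ := Multiset.mem_map.1 hf
          exact monic_X_sub_C a
      have hcoeff : ∀ i : ℕ, i ≤ m → p.coeff (m - i) = s.esymm i := by
        intro i hi
        have h1 : m - i ≤ Multiset.card t := by omega
        have hv := Multiset.prod_X_sub_C_coeff t h1
        rw [hct] at hv
        have e2 : m - (m - i) = i := by omega
        rw [e2] at hv
        rw [hv, ht, Multiset.esymm_neg]
        have hsq : ((-1:ℝ))^i * ((-1:ℝ))^i = 1 := by
          rw [← pow_add]
          exact Even.neg_one_pow ⟨i, by ring⟩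
        rw [← mul_assoc, hsq, one_mul]
      set q := derivative p with hq
      have hqcoeff : ∀ c : ℕ, q.coeff c = p.coeff (c + 1) * ((c:ℝ) + 1) := fun c =>
        coeff_derivative p c
      have hptop : p.coeff m = 1 := by
        have h5 := hpmonic
        rw [Polynomial.Monic, Polynomial.leadingCoeff, hpdeg] at h5
        exact h5
      have hqtop : q.coeff (m - 1) = m := by
        rw [hqcoeff]
        have e3 : m - 1 + 1 = m := by omega
        rw [e3, hptop, one_mul, cast_sub_nat (by omega : 1 ≤ m)]
        ring
      have hqdeg : q.natDegree = m - 1 := by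
        apply le_antisymm
        · have h := natDegree_derivative_le p
          rw [hpdeg] at h
          exact h
        · apply le_natDegree_of_ne_zero
          rw [hqtop]
          have : (0:ℝ) < m := by exact_mod_cast (by omega : 0 < m)
          exact ne_of_gt this
      have hqroots : Multiset.card q.roots = m - 1 := by
        have hub : Multiset.card q.roots ≤ m - 1 := by
          have := q.card_roots'
          omega
        have hlb : m ≤ Multiset.card q.roots + 1 := by
          have := card_roots_le_derivative p
          rw [hproots, hct] at this
          exact this
        omega
      have hvieta : ∀ i : ℕ, i ≤ m - 1 →
          q.coeff (m - 1 - i) = (m : ℝ) * ((-1:ℝ)) ^ i * q.roots.esymm i := by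
        intro i hi
        have h4 : m - 1 - i ≤ q.natDegree := by omega
        have hv := Polynomial.coeff_eq_esymm_roots_of_card (by rw [hqroots, hqdeg]) h4
        rw [hqdeg] at hv
        have e5 : m - 1 - (m - 1 - i) = i := by omega
        rw [e5] at hv
        have hlc : q.leadingCoeff = m := by
          rw [Polynomial.leadingCoeff, hqdeg, hqtop]
        rw [hv, hlc]
      set ν := q.roots.map (fun x : ℝ => -x) with hν
      have hcν : Multiset.card ν = m - 1 := by rw [hν, Multiset.card_map, hqroots]
      have hmpos : (0:ℝ) < m := by exact_mod_cast (by omega : 0 < m)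
      have hkey : ∀ i : ℕ, i ≤ m - 1 → NH ν i = NH s i := by
        intro i hi
        -- q.coeff (m-1-i) two ways
        have h6 : q.coeff (m - 1 - i) = ((m : ℝ) - i) * s.esymm i := by
          rw [hqcoeff]
          have e7 : m - 1 - i + 1 = m - i := by omega
          rw [e7, hcoeff i (by omega)]
          have e8 : ((m - 1 - i : ℕ) : ℝ) = (m:ℝ) - 1 - i := by
            rw [cast_sub_nat (by omega : i ≤ m - 1), cast_sub_nat (by omega : 1 ≤ m)]
            norm_num
          rw [e8]
          ring
        have h7 : q.coeff (m - 1 - i) = (m : ℝ) * ν.esymm i := by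
          rw [hvieta i hi, hν, Multiset.esymm_neg]
          ring
        have hstar : (m : ℝ) * ν.esymm i = ((m:ℝ) - i) * s.esymm i := by
          rw [← h7, h6]
        have hcid : (m:ℝ) * ((m-1).choose i : ℝ) = ((m:ℝ) - i) * (m.choose i : ℝ) := by
          have := congrArg (fun x : ℕ => (x:ℝ)) (choose_id m i)
          push_cast at this
          rw [cast_sub_nat (by omega : i ≤ m)] at this
          exact_mod_cast this
        have hch1 : (0:ℝ) < ((m-1).choose i : ℝ) := by
          exact_mod_cast Nat.choose_pos (by omega : i ≤ m - 1)
        have hch2 : (0:ℝ) < (m.choose i : ℝ) := by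
          exact_mod_cast Nat.choose_pos (by omega : i ≤ m)
        rw [NH, NH, hcν, hs, div_eq_div_iff (ne_of_gt hch1) (ne_of_gt hch2)]
        -- ν.esymm i * C(m,i) = s.esymm i * C(m-1,i)
        have hfin : (m:ℝ) * (ν.esymm i * (m.choose i : ℝ))
            = (m:ℝ) * (s.esymm i * ((m-1).choose i : ℝ)) := by
          calc (m:ℝ) * (ν.esymm i * (m.choose i : ℝ))
              = ((m:ℝ) * ν.esymm i) * (m.choose i : ℝ) := by ring
            _ = (((m:ℝ) - i) * s.esymm i) * (m.choose i : ℝ) := by rw [hstar]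
            _ = s.esymm i * (((m:ℝ) - i) * (m.choose i : ℝ)) := by ring
            _ = s.esymm i * ((m:ℝ) * ((m-1).choose i : ℝ)) := by rw [hcid]
            _ = (m:ℝ) * (s.esymm i * ((m-1).choose i : ℝ)) := by ring
        exact mul_left_cancel₀ (ne_of_gt hmpos) hfin
      have hIH := IH (m-1) (by omega) ν hcν j hj1 (by omega)
      rw [hkey (j-1) (by omega), hkey j (by omega), hkey (j+1) (by omega)] at hIH
      exact hIH

/-- descending chain lemma: `H (j+1) ≤ H 1 * H j`. -/
lemma chain (H : ℕ → ℝ) (M : ℕ) (h0 : H 0 = 1) (hpos : ∀ j ≤ M, 0 < H j)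
    (hN : ∀ j, 1 ≤ j → j ≤ M → H (j-1) * H (j+1) ≤ H j ^ 2) :
    ∀ j ≤ M, H (j+1) ≤ H 1 * H j := by
  intro j
  induction j with
  | zero => intro _; rw [h0, mul_one]
  | succ j ihj =>
    intro hj
    have h1 := ihj (by omega)
    have h2 := hN (j+1) (by omega) hj
    simp only [Nat.add_sub_cancel] at h2
    have hp0 : 0 < H j := hpos j (by omega)
    have hp1 : 0 < H (j+1) := hpos (j+1) hj
    have h3 : H (j+1) ^ 2 ≤ H 1 * H j * H (j+1) := by nlinarith [h1, hp1]
    nlinarith [h2, h3, hp0]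

lemma chain_pow (H : ℕ → ℝ) (M : ℕ) (h0 : H 0 = 1) (hpos : ∀ j ≤ M, 0 < H j)
    (hN : ∀ j, 1 ≤ j → j ≤ M → H (j-1) * H (j+1) ≤ H j ^ 2) :
    ∀ j ≤ M + 1, H j ≤ H 1 ^ j := by
  have hc := chain H M h0 hpos hN
  intro j
  induction j with
  | zero => intro _; rw [h0, pow_zero]
  | succ j ihj =>
    intro hj
    rcases Nat.eq_zero_or_pos j with rfl | hjpos
    · rw [pow_one]
    · have h1 : H (j+1) ≤ H 1 * H j := hc j (by omega)
      have h2 : H j ≤ H 1 ^ j := ihj (by omega)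
      have h3 : 0 < H 1 := hpos 1 (by omega)
      calc H (j+1) ≤ H 1 * H j := h1
        _ ≤ H 1 * H 1 ^ j := by nlinarith [h2, h3]
        _ = H 1 ^ (j+1) := by ring

lemma cast_two_choose (n : ℕ) : 2 * ((n.choose 2 : ℕ) : ℝ) = (n:ℝ) * ((n:ℝ) - 1) := by
  rcases Nat.eq_zero_or_pos n with rfl | hn
  · norm_num
  · have h := Nat.choose_succ_right_eq n 1
    rw [Nat.choose_one_right] at h
    have := congrArg (fun x : ℕ => (x:ℝ)) h
    push_cast [Nat.cast_sub hn] at this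
    linarith

end SigmaChainAux

set_option maxHeartbeats 2000000 in
/-- on `Γ_k` with `H_k = 1`,
`σ_1 σ_k - (k+1) σ_{k+1} ≥ (k/n) σ_1 σ_k ≥ k σ_k`, with equality iff `λ ≡ 1`. -/
theorem sigma_chain_with_Hk_one {n k : ℕ} (hk1 : 1 ≤ k) (hk : k ≤ n)
    (lam : Fin n → ℝ) (hlam : lam ∈ GammaK n k)
    (hHk : esymm n k lam = n.choose k) :
    esymm n 1 lam * esymm n k lam - (k + 1) * esymm n (k + 1) lam ≥
      ((k : ℝ) / n) * (esymm n 1 lam * esymm n k lam) ∧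
    ((k : ℝ) / n) * (esymm n 1 lam * esymm n k lam) ≥ k * esymm n k lam ∧
    (esymm n 1 lam * esymm n k lam - (k + 1) * esymm n (k + 1) lam = k * esymm n k lam
      ↔ ∀ i, lam i = 1) := by
  classical
  -- bridge to multisets
  have hms : ∀ j : ℕ, esymm n j lam = Multiset.esymm (Finset.univ.val.map lam) j := by
    intro j
    rw [Finset.esymm_map_val]
    rfl
  have hcard : Multiset.card (Finset.univ.val.map lam) = n := by
    rw [Multiset.card_map]
    exact Finset.card_univ.trans (Fintype.card_fin n)
  have hn1 : 1 ≤ n := le_trans hk1 hk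
  have hn0 : (0:ℝ) < n := by exact_mod_cast hn1
  have hkR : (0:ℝ) < k := by exact_mod_cast hk1
  have hckpos : (0:ℝ) < (n.choose k : ℝ) := by exact_mod_cast Nat.choose_pos hk
  have hσkpos : 0 < esymm n k lam := by rw [hHk]; exact hckpos
  set H : ℕ → ℝ := fun j => esymm n j lam / (n.choose j : ℝ) with hH
  have hσ0 : esymm n 0 lam = 1 := by rw [hms 0, SigmaChainAux.esymm_zero]
  have hσ1sum : esymm n 1 lam = ∑ i, lam i := by rw [hms 1, SigmaChainAux.esymm_one]; rfl
  have hH0 : H 0 = 1 := by rw [hH]; simp [hσ0]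
  have hHk1 : H k = 1 := by rw [hH]; simp only []; rw [hHk, div_self (ne_of_gt hckpos)]
  have hHpos : ∀ j ≤ k, 0 < H j := by
    intro j hj
    rcases Nat.eq_zero_or_pos j with rfl | hj1
    · rw [hH0]; norm_num
    · have h1 : 0 < esymm n j lam := hlam j hj1 hj
      have h2 : (0:ℝ) < (n.choose j : ℝ) := by exact_mod_cast Nat.choose_pos (le_trans hj hk)
      exact div_pos h1 h2
  have hHN : ∀ i : ℕ, H i = SigmaChainAux.NH (Finset.univ.val.map lam) i := by
    intro i
    have hnh : SigmaChainAux.NH (Finset.univ.val.map lam) i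
        = Multiset.esymm (Finset.univ.val.map lam) i
          / ((Multiset.card (Finset.univ.val.map lam)).choose i : ℝ) := rfl
    rw [hnh, hcard, ← hms i]
  have hNewt : ∀ j, 1 ≤ j → j + 1 ≤ n → H (j-1) * H (j+1) ≤ H j ^ 2 := by
    intro j h1 h2
    rw [hHN (j-1), hHN (j+1), hHN j]
    exact SigmaChainAux.newton_NH n (Finset.univ.val.map lam) hcard j h1 h2
  set M0 := min k (n-1) with hM0
  have hM0k : M0 ≤ k := min_le_left _ _
  have hM0n : M0 ≤ n - 1 := min_le_right _ _
  have hkM : k ≤ M0 + 1 := by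
    rcases Nat.le_total k (n-1) with h | h
    · rw [hM0, min_eq_left h]; omega
    · rw [hM0, min_eq_right h]; omega
  have hchain := SigmaChainAux.chain H M0 hH0 (fun j hj => hHpos j (le_trans hj hM0k))
    (fun j h1 h2 => hNewt j h1 (by omega))
  have hpow := SigmaChainAux.chain_pow H M0 hH0 (fun j hj => hHpos j (le_trans hj hM0k))
    (fun j h1 h2 => hNewt j h1 (by omega))
  have hH1pos : 0 < H 1 := hHpos 1 hk1
  have hH1ge : 1 ≤ H 1 := by
    by_contra hcon
    push_neg at hcon
    have h1 : H k ≤ H 1 ^ k := hpow k hkM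
    have h2 : H 1 ^ k < 1 := pow_lt_one₀ hH1pos.le hcon (by omega)
    rw [hHk1] at h1
    linarith
  have hch1 : (n.choose 1 : ℝ) = n := by rw [Nat.choose_one_right]
  have hσ1 : (n:ℝ) ≤ esymm n 1 lam := by
    have := hH1ge
    rw [hH] at this
    simp only [] at this
    rw [hch1, le_div_iff₀ hn0] at this
    linarith
  -- PART 2
  have part2 : ((k : ℝ) / n) * (esymm n 1 lam * esymm n k lam) ≥ k * esymm n k lam := by
    rw [ge_iff_le, div_mul_eq_mul_div, le_div_iff₀ hn0]
    nlinarith [mul_le_mul_of_nonneg_left (mul_le_mul_of_nonneg_right hσ1 hσkpos.le) hkR.le]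
  -- PART 1
  have part1 : esymm n 1 lam * esymm n k lam - (k + 1) * esymm n (k + 1) lam ≥
      ((k : ℝ) / n) * (esymm n 1 lam * esymm n k lam) := by
    by_cases hkn : k = n
    · subst hkn
      have hz : esymm k (k+1) lam = 0 := by
        rw [hms (k+1)]
        exact SigmaChainAux.esymm_of_card_lt (by omega)
      rw [hz, div_self (ne_of_gt hn0)]
      linarith
    · have hklt : k < n := lt_of_le_of_ne hk hkn
      have hM0eq : M0 = k := by rw [hM0, min_eq_left (by omega)]
      have hHk2 : H (k+1) ≤ H 1 := by
        have := hchain k (by omega)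
        rwa [hHk1, mul_one] at this
      set a := (n.choose k : ℝ) with ha
      set b := (n.choose (k+1) : ℝ) with hb
      have hbpos : (0:ℝ) < b := by
        rw [hb]; exact_mod_cast Nat.choose_pos (by omega : k + 1 ≤ n)
      have hab : ((k:ℝ)+1) * b = ((n:ℝ) - k) * a := by
        have h := Nat.choose_succ_right_eq n k
        have := congrArg (fun x : ℕ => (x:ℝ)) h
        push_cast [Nat.cast_sub (le_of_lt hklt)] at this
        rw [ha, hb]
        push_cast
        linarith
      have hnb : (n:ℝ) * esymm n (k+1) lam ≤ b * esymm n 1 lam := by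
        have h1 := hHk2
        rw [hH] at h1
        simp only [] at h1
        rw [hch1, div_le_div_iff₀ hbpos hn0] at h1
        linarith
      rw [ge_iff_le, div_mul_eq_mul_div, div_le_iff₀ hn0]
      have h2 := mul_le_mul_of_nonneg_left hnb (by positivity : (0:ℝ) ≤ (k:ℝ)+1)
      have hab1 : ((k:ℝ)+1) * (b * esymm n 1 lam) = ((n:ℝ) - k) * (a * esymm n 1 lam) := by
        calc ((k:ℝ)+1) * (b * esymm n 1 lam) = (((k:ℝ)+1) * b) * esymm n 1 lam := by ring
          _ = (((n:ℝ) - k) * a) * esymm n 1 lam := by rw [hab]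
          _ = ((n:ℝ) - k) * (a * esymm n 1 lam) := by ring
      rw [hHk]
      nlinarith [h2, hab1]
  refine ⟨part1, part2, ?_, ?_⟩
  · -- equality implies lam ≡ 1
    intro heq
    have e2 : ((k : ℝ) / n) * (esymm n 1 lam * esymm n k lam) = k * esymm n k lam := by
      have h1 : ((k : ℝ) / n) * (esymm n 1 lam * esymm n k lam) ≤ k * esymm n k lam := by
        rw [← heq]; exact part1
      linarith [part2]
    have e2' : (k:ℝ) * (esymm n 1 lam * esymm n k lam) = k * esymm n k lam * n := by
      rw [div_mul_eq_mul_div, div_eq_iff (ne_of_gt hn0)] at e2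
      exact e2
    have hσ1n : esymm n 1 lam = n := by
      have h2 : ((k:ℝ) * esymm n k lam) * esymm n 1 lam = ((k:ℝ) * esymm n k lam) * n := by
        linear_combination e2'
      exact mul_left_cancel₀ (by positivity) h2
    -- get 2 σ₂ = n (n-1)
    have hσ2 : 2 * esymm n 2 lam = (n:ℝ) * ((n:ℝ) - 1) := by
      rcases Nat.lt_or_ge k 2 with hk2 | hk2
      · -- k = 1
        have hkeq : k = 1 := by omega
        subst hkeq
        rcases Nat.eq_or_lt_of_le hn1 with hneq | hn2
        · -- n = 1 : esymm 1 2 lam = 0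
          have hz : esymm n 2 lam = 0 := by
            rw [hms 2]
            exact SigmaChainAux.esymm_of_card_lt (by omega)
          rw [hz, ← hneq]
          norm_num
        · -- n ≥ 2 : directly from the equality
          rw [hHk, hch1] at heq
          push_cast at heq
          nlinarith [heq]
      · -- k ≥ 2 : use the chain
        have hH1eq : H 1 = 1 := by
          rw [hH]
          simp only []
          rw [hch1, hσ1n, div_self (ne_of_gt hn0)]
        have hdec : ∀ j ≤ M0, H (j+1) ≤ H j := by
          intro j hj
          have := hchain j hj
          rwa [hH1eq, one_mul] at this
        have hM01 : 1 ≤ M0 := by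
          have hn2 : 2 ≤ n := le_trans hk2 hk
          rw [hM0]
          exact le_min hk1 (by omega)
        have hkey : ∀ i : ℕ, 2 + i ≤ M0 + 1 → H (2 + i) ≤ H 2 := by
          intro i
          induction i with
          | zero => intro _; exact le_refl _
          | succ i ihi =>
            intro hi
            have h1 : H (2 + i + 1) ≤ H (2 + i) := hdec (2 + i) (by omega)
            have h2 : H (2 + i) ≤ H 2 := ihi (by omega)
            have e3 : 2 + (i + 1) = 2 + i + 1 := by omega
            rw [e3]
            linarith
        have hklow : H k ≤ H 2 := by
          have e4 : 2 + (k - 2) = k := by omega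
          have := hkey (k - 2) (by omega)
          rwa [e4] at this
        have hhigh : H 2 ≤ 1 := by
          have h5 := hchain 1 hM01
          rw [hH1eq, one_mul] at h5
          simpa using h5
        have hH2 : H 2 = 1 := le_antisymm hhigh (by rw [← hHk1]; exact hklow)
        have hch2pos : (0:ℝ) < (n.choose 2 : ℝ) := by
          exact_mod_cast Nat.choose_pos (le_trans hk2 hk)
        have hσ2c : esymm n 2 lam = (n.choose 2 : ℝ) := by
          rw [hH] at hH2
          simp only [] at hH2
          field_simp at hH2
          exact hH2
        rw [hσ2c, SigmaChainAux.cast_two_choose]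
    -- sum of squares argument
    have hsumsq : ∑ i, (lam i)^2 = (n:ℝ) := by
      have hB := SigmaChainAux.sq_sum_esymm (Finset.univ.val.map lam)
      have h1 : (Finset.univ.val.map lam).sum = ∑ i, lam i := rfl
      have h2 : ((Finset.univ.val.map lam).map (fun x => x ^ 2)).sum = ∑ i, (lam i)^2 := by
        rw [Multiset.map_map]
        rfl
      rw [h1, h2, ← hms 2] at hB
      rw [← hσ1sum] at hB
      rw [hσ1n] at hB
      nlinarith [hB, hσ2]
    have hzero : ∑ i, (lam i - 1)^2 = 0 := by
      have hexp : ∀ i : Fin n, (lam i - 1)^2 = (lam i)^2 - 2 * lam i + 1 := fun i => by ring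
      rw [Finset.sum_congr rfl (fun i _ => hexp i), Finset.sum_add_distrib,
        Finset.sum_sub_distrib, ← Finset.mul_sum, Finset.sum_const, Finset.card_univ,
        Fintype.card_fin, nsmul_eq_mul, mul_one]
      rw [← hσ1sum, hσ1n, hsumsq]
      ring
    intro i
    have h3 := (Finset.sum_eq_zero_iff_of_nonneg (fun i _ => sq_nonneg (lam i - 1))).1 hzero i
      (Finset.mem_univ i)
    have h4 : lam i - 1 = 0 := by
      have := sq_eq_zero_iff.1 h3
      exact this
    linarith
  · -- lam ≡ 1 implies equality
    intro h1
    have hcomp : ∀ j : ℕ, esymm n j lam = (n.choose j : ℝ) := by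
      intro j
      rw [esymm]
      rw [Finset.sum_congr rfl (fun s _ => Finset.prod_eq_one (fun i _ => h1 i))]
      rw [Finset.sum_const, Finset.card_powersetCard, Finset.card_univ, Fintype.card_fin,
        nsmul_eq_mul, mul_one]
    rw [hcomp 1, hcomp k, hcomp (k+1)]
    have h := Nat.choose_succ_right_eq n k
    have hcast := congrArg (fun x : ℕ => (x:ℝ)) h
    push_cast [Nat.cast_sub hk] at hcast
    rw [Nat.choose_one_right]
    push_cast
    linarith
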